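/- Let (g,k) be a Hermitian symmetric pair and M a unitary module in O. Then the Dirac cohomology equals the kernel: H_D^{g,k}(M) ≅ ker D_{g,k}(M), and ker D_{g,k}(M) ≅ H^•(p⁺, M) ⊗ ℂ_{ρ−ρ_k} ≅ H_•(p⁻, M) ⊗ ℂ_{ρ−ρ_k}, where H^•(p⁺,M) is nilpotent Lie algebra cohomology and H_•(p⁻,M) is nilpotent Lie algebra homology. -/

import Mathlib

open LinearMap

section Aux

lemma stmt15_aux_range {T : Type*} [AddCommGroup T] [Module ℂ T]
    (P Q A : Module.End ℂ T) (hP2 : P * P = 0) (hAe : A = P * Q + Q * P)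
    {c : ℂ} (hc : c ≠ 0) :
    ∀ (n : ℕ) (v : T), ((A - c • 1) ^ n) v = 0 → P v = 0 → v ∈ LinearMap.range P := by
  have hcomm : (A - c • (1 : Module.End ℂ T)) * P = P * (A - c • 1) := by
    have h1 : A * P = P * (Q * P) := by
      rw [hAe, add_mul, mul_assoc, mul_assoc, hP2, mul_zero, add_zero]
    have h2 : P * A = P * (Q * P) := by
      rw [hAe, mul_add, ← mul_assoc, ← mul_assoc, hP2, zero_mul, zero_add]
    rw [sub_mul, mul_sub, h1, h2, smul_mul_assoc, mul_smul_comm, one_mul, mul_one]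
  intro n
  induction n with
  | zero =>
      intro v hv _
      simp only [pow_zero, Module.End.one_apply] at hv
      subst hv; exact zero_mem _
  | succ n ih =>
      intro v hv hPv
      set u : T := (A - c • 1) v with hu
      have hvn : ((A - c • 1) ^ n) u = 0 := by
        rw [hu, ← Module.End.mul_apply, ← pow_succ]; exact hv
      have hPu : P u = 0 := by
        have : P u = ((A - c • 1) * P) v := by
          rw [hcomm, Module.End.mul_apply]
        rw [this, Module.End.mul_apply, hPv, map_zero]
      obtain ⟨w, hw⟩ := ih u hvn hPu
      refine ⟨c⁻¹ • (Q v - w), ?_⟩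
      have hAv : A v = P (Q v) := by
        rw [hAe]
        simp only [LinearMap.add_apply, Module.End.mul_apply, hPv, map_zero, add_zero]
      have hwu : P w = A v - c • v := by
        rw [hw, hu]
        simp [LinearMap.sub_apply, LinearMap.smul_apply, Module.End.one_apply]
      rw [map_smul, map_sub, hwu, hAv]
      rw [sub_sub_cancel, smul_smul, inv_mul_cancel₀ hc, one_smul]

/-- Hodge-type decomposition: if `P x = 0` then `x ∈ range P ⊔ E₀(A)`. -/
lemma stmt15_aux_decomp {T : Type*} [AddCommGroup T] [Module ℂ T]
    (P Q A : Module.End ℂ T) (hP2 : P * P = 0) (hAe : A = P * Q + Q * P)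
    (hdecomp : ⨆ c : ℂ, A.maxGenEigenspace c = ⊤)
    (x : T) (hx : P x = 0) :
    x ∈ LinearMap.range P ⊔ A.maxGenEigenspace 0 := by
  classical
  have hcomm : Commute A P := by
    unfold Commute SemiconjBy
    have h1 : A * P = P * (Q * P) := by
      rw [hAe, add_mul, mul_assoc, mul_assoc, hP2, mul_zero, add_zero]
    have h2 : P * A = P * (Q * P) := by
      rw [hAe, mul_add, ← mul_assoc, ← mul_assoc, hP2, zero_mul, zero_add]
    rw [h1, h2]
  have hxmem : x ∈ ⨆ c : ℂ, A.maxGenEigenspace c := hdecomp ▸ Submodule.mem_top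
  rw [Submodule.mem_iSup_iff_exists_finsupp] at hxmem
  obtain ⟨f, hf, hsum⟩ := hxmem
  have hmaps : ∀ c : ℂ, P (f c) ∈ A.maxGenEigenspace c := fun c =>
    Module.End.mapsTo_maxGenEigenspace_of_comm hcomm c (hf c)
  have hgsum : (∑ c ∈ f.support, P (f c)) = 0 := by
    rw [← map_sum]
    have h : (∑ c ∈ f.support, f c) = x := hsum
    rw [h, hx]
  have hPf : ∀ c : ℂ, P (f c) = 0 := by
    intro c
    by_cases hcs : c ∈ f.support
    · have hdis := (Module.End.independent_maxGenEigenspace A) c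
      have h1 : P (f c) = - ∑ c' ∈ f.support.erase c, P (f c') := by
        have h := Finset.add_sum_erase f.support (fun c' => P (f c')) hcs
        rw [hgsum] at h
        exact eq_neg_of_add_eq_zero_left h
      have h2 : P (f c) ∈ ⨆ (j : ℂ) (_ : j ≠ c), A.maxGenEigenspace j := by
        rw [h1]
        refine neg_mem (Submodule.sum_mem _ fun c' hc' => ?_)
        exact Submodule.mem_iSup_of_mem c'
          (Submodule.mem_iSup_of_mem (Finset.ne_of_mem_erase hc') (hmaps c'))
      exact (Submodule.disjoint_def.mp hdis) _ (hmaps c) h2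
    · rw [Finsupp.notMem_support_iff.mp hcs, map_zero]
  have hsum' : x = ∑ c ∈ f.support, f c := hsum.symm
  rw [hsum']
  refine Submodule.sum_mem _ fun c _ => ?_
  by_cases hc0 : c = 0
  · exact Submodule.mem_sup_right (hc0 ▸ hf c)
  · refine Submodule.mem_sup_left ?_
    obtain ⟨k, hk⟩ := (Module.End.mem_maxGenEigenspace A c (f c)).mp (hf c)
    exact stmt15_aux_range P Q A hP2 hAe hc0 k (f c) hk (hPf c)

end Aux

/-- Let `(g,k)` be a Hermitian symmetric pair and `M` a unitary module
in `O`.  Under the identification `M ⊗ S ≅ Hom(⋀p⁺, M) ⊗ ℂ_{ρ−ρ_k}`, the Dirac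
operator is `D = C⁺ + C⁻` where `C⁺ = d` is the Chevalley–Eilenberg differential
computing `H^•(p⁺, M)` and `C⁻ = ∂` is the Lie homology differential computing
`H_•(p⁻, M)`; they are square-zero, adjoint to each other up to sign (unitarity), and
`M ⊗ S` is an orthogonal sum of finite-dimensional generalized eigenspaces of `D²`
(since `M ∈ O`).  Then
`H_D(M) = ker D/(im D ∩ ker D) ≅ ker D ≅ ker C⁺/im C⁺ ≅ ker C⁻/im C⁻`, i.e. the Dirac
cohomology coincides with `H^•(p⁺,M) ⊗ ℂ_{ρ−ρ_k}` and with `H_•(p⁻,M) ⊗ ℂ_{ρ−ρ_k}`. -/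
theorem stmt15 {T : Type*} [NormedAddCommGroup T] [InnerProductSpace ℂ T]
    (Cp Cm : Module.End ℂ T)          -- C⁺ = d and C⁻ = ∂
    (hp2 : Cp * Cp = 0) (hm2 : Cm * Cm = 0)
    (hadj : ∀ x y : T, (inner ℂ (Cp x) y : ℂ) = - inner ℂ x (Cm y))
    (D : Module.End ℂ T) (hD : D = Cp + Cm)
    (hdecomp : ⨆ c : ℂ, (D ^ 2).maxGenEigenspace c = ⊤)
    (hfin : ∀ c : ℂ, FiniteDimensional ℂ ((D ^ 2).maxGenEigenspace c)) :
    Nonempty ((LinearMap.ker D ⧸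
        ((LinearMap.range D ⊓ LinearMap.ker D).comap (LinearMap.ker D).subtype))
      ≃ₗ[ℂ] LinearMap.ker D) ∧
    Nonempty ((LinearMap.ker Cp ⧸
        ((LinearMap.range Cp).comap (LinearMap.ker Cp).subtype))
      ≃ₗ[ℂ] LinearMap.ker D) ∧
    Nonempty ((LinearMap.ker Cm ⧸
        ((LinearMap.range Cm).comap (LinearMap.ker Cm).subtype))
      ≃ₗ[ℂ] LinearMap.ker D) := by
  classical
  set A : Module.End ℂ T := D ^ 2 with hA
  have hAe : A = Cp * Cm + Cm * Cp := by
    rw [hA, hD, pow_two, add_mul, mul_add, mul_add, hp2, hm2, zero_add, add_zero]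
  have hAe' : A = Cm * Cp + Cp * Cm := by rw [hAe, add_comm]
  -- adjoint of Cm
  have hadjm : ∀ x y : T, (inner ℂ (Cm x) y : ℂ) = - inner ℂ x (Cp y) := by
    intro x y
    have h := hadj y x
    have h2 : (inner ℂ y (Cm x) : ℂ) = - inner ℂ (Cp y) x := by
      rw [eq_neg_iff_add_eq_zero] at h ⊢
      rw [add_comm]; exact h
    calc (inner ℂ (Cm x) y : ℂ) = starRingEnd ℂ (inner ℂ y (Cm x)) := (inner_conj_symm _ _).symm
      _ = starRingEnd ℂ (- inner ℂ (Cp y) x) := by rw [h2]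
      _ = - starRingEnd ℂ (inner ℂ (Cp y) x) := by rw [map_neg]
      _ = - inner ℂ x (Cp y) := by rw [inner_conj_symm]
  -- D is skew-adjoint
  have hDsk : ∀ x y : T, (inner ℂ (D x) y : ℂ) = - inner ℂ x (D y) := by
    intro x y
    rw [hD]
    simp only [LinearMap.add_apply]
    rw [inner_add_left, inner_add_right, hadj, hadjm]
    ring
  -- A is self-adjoint
  have hAap : ∀ x : T, A x = D (D x) := by
    intro x; rw [hA, pow_two, Module.End.mul_apply]
  have hAsa : ∀ x y : T, (inner ℂ (A x) y : ℂ) = inner ℂ x (A y) := by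
    intro x y
    rw [hAap, hAap, hDsk, hDsk, neg_neg]
  -- ker D = ker Cp ∩ ker Cm
  have hker : ∀ x : T, D x = 0 → Cp x = 0 ∧ Cm x = 0 := by
    intro x hx
    have hc1 : (inner ℂ (Cp x) (Cm x) : ℂ) = 0 := by
      have h := hadj x (Cm x)
      have h2 : Cm (Cm x) = 0 := by
        have := congrArg (fun g : Module.End ℂ T => g x) hm2
        simpa [Module.End.mul_apply] using this
      rw [h2, inner_zero_right, neg_zero] at h
      exact h
    have hc2 : (inner ℂ (Cm x) (Cp x) : ℂ) = 0 := by
      rw [← inner_conj_symm, hc1, map_zero]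
    have h0 : (inner ℂ (Cp x) (Cp x) : ℂ) + inner ℂ (Cm x) (Cm x) = 0 := by
      have : (inner ℂ (D x) (D x) : ℂ) = 0 := by rw [hx, inner_zero_left]
      rw [hD] at this
      simp only [LinearMap.add_apply] at this
      rw [inner_add_left, inner_add_right, inner_add_right, hc1, hc2] at this
      rw [← this]; ring
    have hre : RCLike.re (inner ℂ (Cp x) (Cp x) : ℂ) = 0 ∧
        RCLike.re (inner ℂ (Cm x) (Cm x) : ℂ) = 0 := by
      have h1 : 0 ≤ RCLike.re (inner ℂ (Cp x) (Cp x) : ℂ) := inner_self_nonneg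
      have h2 : 0 ≤ RCLike.re (inner ℂ (Cm x) (Cm x) : ℂ) := inner_self_nonneg
      have h3 : RCLike.re (inner ℂ (Cp x) (Cp x) : ℂ) +
          RCLike.re (inner ℂ (Cm x) (Cm x) : ℂ) = 0 := by
        rw [← map_add, h0, map_zero]
      constructor <;> linarith
    constructor
    · rw [← inner_self_eq_zero (𝕜 := ℂ) (x := Cp x)]
      exact RCLike.ext hre.1 (inner_self_im _)
    · rw [← inner_self_eq_zero (𝕜 := ℂ) (x := Cm x)]
      exact RCLike.ext hre.2 (inner_self_im _)
  -- ker D ∩ range Cp = 0 and ker D ∩ range Cm = 0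
  have hrangep : ∀ x : T, D x = 0 → x ∈ LinearMap.range Cp → x = 0 := by
    rintro x hx ⟨y, rfl⟩
    have hm : Cm (Cp y) = 0 := (hker _ hx).2
    have : (inner ℂ (Cp y) (Cp y) : ℂ) = 0 := by
      rw [hadj, hm, inner_zero_right, neg_zero]
    exact inner_self_eq_zero.mp this
  have hrangem : ∀ x : T, D x = 0 → x ∈ LinearMap.range Cm → x = 0 := by
    rintro x hx ⟨y, rfl⟩
    have hm : Cp (Cm y) = 0 := (hker _ hx).1
    have : (inner ℂ (Cm y) (Cm y) : ℂ) = 0 := by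
      rw [hadjm, hm, inner_zero_right, neg_zero]
    exact inner_self_eq_zero.mp this
  -- also: ker D ∩ range D = 0
  have hrangeD : ∀ x : T, D x = 0 → x ∈ LinearMap.range D → x = 0 := by
    rintro x hx ⟨y, rfl⟩
    have : (inner ℂ (D y) (D y) : ℂ) = 0 := by
      rw [hDsk, hx, inner_zero_right, neg_zero]
    exact inner_self_eq_zero.mp this
  -- nilpotency of self-adjoint A: Aⁿ x = 0 → A x = 0
  have hstep : ∀ (n : ℕ) (x : T), (A ^ (n + 2)) x = 0 → (A ^ (n + 1)) x = 0 := by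
    intro n x h
    have he : (inner ℂ ((A ^ (n + 1)) x) ((A ^ (n + 1)) x) : ℂ)
        = inner ℂ ((A ^ n) x) ((A ^ (n + 2)) x) := by
      have e1 : (A ^ (n + 1)) x = A ((A ^ n) x) := by
        rw [pow_succ', Module.End.mul_apply]
      have e2 : (A ^ (n + 2)) x = A ((A ^ (n + 1)) x) := by
        rw [pow_succ', Module.End.mul_apply]
      rw [e1, hAsa, ← e1, ← e2]
    rw [h, inner_zero_right] at he
    exact inner_self_eq_zero.mp he
  have hnil : ∀ (n : ℕ) (x : T), (A ^ (n + 1)) x = 0 → A x = 0 := by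
    intro n
    induction n with
    | zero => intro x h; simpa using h
    | succ n ih => intro x h; exact ih x (hstep n x h)
  -- E₀(A) = ker D
  have hE0 : A.maxGenEigenspace 0 = LinearMap.ker D := by
    ext x
    simp only [Module.End.mem_maxGenEigenspace, zero_smul, sub_zero, LinearMap.mem_ker]
    constructor
    · rintro ⟨k, hk⟩
      have hAx : A x = 0 := by
        cases k with
        | zero =>
            simp only [pow_zero, Module.End.one_apply] at hk
            rw [hk, map_zero]
        | succ k => exact hnil k x hk
      have : (inner ℂ (D x) (D x) : ℂ) = 0 := by
        rw [hDsk, ← hAap, hAx, inner_zero_right, neg_zero]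
      exact inner_self_eq_zero.mp this
    · intro h
      exact ⟨1, by rw [pow_one, hAap, h, map_zero]⟩
  -- First isomorphism: quotient by the trivial submodule
  have hbot : (LinearMap.range D ⊓ LinearMap.ker D).comap (LinearMap.ker D).subtype = ⊥ := by
    rw [eq_bot_iff]
    rintro ⟨x, hx⟩ hmem
    simp only [Submodule.mem_comap, Submodule.mem_inf, Submodule.coe_subtype] at hmem
    have hx0 : x = 0 := hrangeD x (LinearMap.mem_ker.mp hx) hmem.1
    rw [Submodule.mem_bot]
    exact Subtype.ext hx0
  refine ⟨⟨Submodule.quotEquivOfEqBot _ hbot⟩, ?_, ?_⟩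
  -- Second isomorphism
  · have hsub : LinearMap.ker D ≤ LinearMap.ker Cp := fun x hx =>
      LinearMap.mem_ker.mpr (hker x (LinearMap.mem_ker.mp hx)).1
    set N := (LinearMap.range Cp).comap (LinearMap.ker Cp).subtype with hN
    let ψ : LinearMap.ker D →ₗ[ℂ] (LinearMap.ker Cp ⧸ N) :=
      N.mkQ ∘ₗ Submodule.inclusion hsub
    have hinj : Function.Injective ψ := by
      rw [← LinearMap.ker_eq_bot, eq_bot_iff]
      rintro ⟨x, hx⟩ hmem
      have h1 : Submodule.inclusion hsub ⟨x, hx⟩ ∈ N := by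
        have := LinearMap.mem_ker.mp hmem
        simpa [ψ, Submodule.Quotient.mk_eq_zero] using this
      have h2 : x ∈ LinearMap.range Cp := h1
      have hx0 : x = 0 := hrangep x (LinearMap.mem_ker.mp hx) h2
      rw [Submodule.mem_bot]
      exact Subtype.ext hx0
    have hsurj : Function.Surjective ψ := by
      intro q
      obtain ⟨⟨x, hx⟩, rfl⟩ := N.mkQ_surjective q
      have hx' : Cp x = 0 := LinearMap.mem_ker.mp hx
      have hmem := stmt15_aux_decomp Cp Cm A hp2 hAe hdecomp x hx'
      rw [Submodule.mem_sup] at hmem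
      obtain ⟨r, hr, y, hy, hry⟩ := hmem
      have hyD : y ∈ LinearMap.ker D := hE0 ▸ hy
      refine ⟨⟨y, hyD⟩, ?_⟩
      show N.mkQ (Submodule.inclusion hsub ⟨y, hyD⟩) = N.mkQ ⟨x, hx⟩
      rw [Submodule.mkQ_apply, Submodule.mkQ_apply, Submodule.Quotient.eq]
      have : (⟨y, hsub hyD⟩ : LinearMap.ker Cp) - ⟨x, hx⟩ = ⟨y - x, by
        exact sub_mem (hsub hyD) hx⟩ := rfl
      show (⟨y, hsub hyD⟩ : LinearMap.ker Cp) - ⟨x, hx⟩ ∈ N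
      rw [this]
      show y - x ∈ LinearMap.range Cp
      have : y - x = -r := by rw [← hry]; abel
      rw [this]
      exact neg_mem hr
    exact ⟨(LinearEquiv.ofBijective ψ ⟨hinj, hsurj⟩).symm⟩
  -- Third isomorphism
  · have hsub : LinearMap.ker D ≤ LinearMap.ker Cm := fun x hx =>
      LinearMap.mem_ker.mpr (hker x (LinearMap.mem_ker.mp hx)).2
    set N := (LinearMap.range Cm).comap (LinearMap.ker Cm).subtype with hN
    let ψ : LinearMap.ker D →ₗ[ℂ] (LinearMap.ker Cm ⧸ N) :=
      N.mkQ ∘ₗ Submodule.inclusion hsub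
    have hinj : Function.Injective ψ := by
      rw [← LinearMap.ker_eq_bot, eq_bot_iff]
      rintro ⟨x, hx⟩ hmem
      have h1 : Submodule.inclusion hsub ⟨x, hx⟩ ∈ N := by
        have := LinearMap.mem_ker.mp hmem
        simpa [ψ, Submodule.Quotient.mk_eq_zero] using this
      have h2 : x ∈ LinearMap.range Cm := h1
      have hx0 : x = 0 := hrangem x (LinearMap.mem_ker.mp hx) h2
      rw [Submodule.mem_bot]
      exact Subtype.ext hx0
    have hsurj : Function.Surjective ψ := by
      intro q
      obtain ⟨⟨x, hx⟩, rfl⟩ := N.mkQ_surjective q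
      have hx' : Cm x = 0 := LinearMap.mem_ker.mp hx
      have hmem := stmt15_aux_decomp Cm Cp A hm2 hAe' hdecomp x hx'
      rw [Submodule.mem_sup] at hmem
      obtain ⟨r, hr, y, hy, hry⟩ := hmem
      have hyD : y ∈ LinearMap.ker D := hE0 ▸ hy
      refine ⟨⟨y, hyD⟩, ?_⟩
      show N.mkQ (Submodule.inclusion hsub ⟨y, hyD⟩) = N.mkQ ⟨x, hx⟩
      rw [Submodule.mkQ_apply, Submodule.mkQ_apply, Submodule.Quotient.eq]
      show (⟨y, hsub hyD⟩ : LinearMap.ker Cm) - ⟨x, hx⟩ ∈ N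
      show y - x ∈ LinearMap.range Cm
      have : y - x = -r := by rw [← hry]; abel
      rw [this]
      exact neg_mem hr
    exact ⟨(LinearEquiv.ofBijective ψ ⟨hinj, hsurj⟩).symm⟩
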